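/- Every nonzero eigenvalue of the operator u ↦ -u'''' on (-1/2, 1/2) with boundary conditions u'(±1/2) = u'''(±1/2) = 0 satisfies λ ≤ -π⁴; i.e., if u is a nonzero C⁴ function with u'''' = -λ u, u'(±1/2) = u'''(±1/2) = 0, and λ ≠ 0, then λ ≤ -π⁴. -/

import Mathlib

open Real Set intervalIntegral

set_option maxHeartbeats 1000000

/-- Spectral gap for the insulated hyperdiffusion operator `u ↦ -u''''` on
`(-1/2, 1/2)`: if `u` is a nonzero `C⁴` function with `u'''' = -λ u`,
`u'(±1/2) = u'''(±1/2) = 0` and `λ ≠ 0`, then `λ ≤ -π⁴`. -/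
theorem stmt8 (u : ℝ → ℝ) (lam : ℝ) (hu : ContDiff ℝ 4 u)
    (heig : ∀ ξ ∈ Set.Icc (-(1/2) : ℝ) (1/2), iteratedDeriv 4 u ξ = -lam * u ξ)
    (hb1 : deriv u (1/2) = 0) (hb2 : deriv u (-(1/2)) = 0)
    (hb3 : iteratedDeriv 3 u (1/2) = 0) (hb4 : iteratedDeriv 3 u (-(1/2)) = 0)
    (hne : ∃ ξ ∈ Set.Icc (-(1/2) : ℝ) (1/2), u ξ ≠ 0)
    (hlam : lam ≠ 0) :
    lam ≤ -π ^ 4 := by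
  -- derivatives
  set u1 := deriv u with hu1def
  set u2 := deriv u1 with hu2def
  set u3 := deriv u2 with hu3def
  set u4 := deriv u3 with hu4def
  -- regularity chain
  have h41 : (4 : WithTop ℕ∞) = 3 + 1 := by norm_num
  have h31 : (3 : WithTop ℕ∞) = 2 + 1 := by norm_num
  have h21 : (2 : WithTop ℕ∞) = 1 + 1 := by norm_num
  rw [h41, contDiff_succ_iff_deriv] at hu
  obtain ⟨hd0, -, hc1⟩ := hu
  rw [h31, contDiff_succ_iff_deriv] at hc1
  obtain ⟨hd1, -, hc2⟩ := hc1
  rw [h21, contDiff_succ_iff_deriv] at hc2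
  obtain ⟨hd2, -, hc3⟩ := hc2
  rw [contDiff_one_iff_deriv] at hc3
  obtain ⟨hd3, hcont4⟩ := hc3
  have hD0 : ∀ x, HasDerivAt u (u1 x) x := fun x => (hd0 x).hasDerivAt
  have hD1 : ∀ x, HasDerivAt u1 (u2 x) x := fun x => (hd1 x).hasDerivAt
  have hD2 : ∀ x, HasDerivAt u2 (u3 x) x := fun x => (hd2 x).hasDerivAt
  have hD3 : ∀ x, HasDerivAt u3 (u4 x) x := fun x => (hd3 x).hasDerivAt
  have hcont0 : Continuous u := hd0.continuous
  have hcont1 : Continuous u1 := hd1.continuous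
  have hcont2 : Continuous u2 := hd2.continuous
  have hcont3 : Continuous u3 := hd3.continuous
  have hiter3 : iteratedDeriv 3 u = u3 := by
    simp [iteratedDeriv_succ, iteratedDeriv_zero, hu3def, hu2def, hu1def]
  have hiter4 : iteratedDeriv 4 u = u4 := by
    simp [iteratedDeriv_succ, iteratedDeriv_zero, hu4def, hu3def, hu2def, hu1def]
  rw [hiter3] at hb3 hb4
  rw [hiter4] at heig
  have hmu : 0 < -lam := by
    have hab : (-(1/2) : ℝ) ≤ 1/2 := by norm_num
    have huIcc : uIcc (-(1/2) : ℝ) (1/2) = Icc (-(1/2) : ℝ) (1/2) := uIcc_of_le hab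
    -- first IBP : ∫ u4 u = - ∫ u3 u1
    have I1 : ∫ x in (-(1/2) : ℝ)..(1/2), u3 x * u1 x
        = u3 (1/2) * u (1/2) - u3 (-(1/2)) * u (-(1/2))
          - ∫ x in (-(1/2) : ℝ)..(1/2), u4 x * u x :=
      integral_mul_deriv_eq_deriv_mul (fun x _ => hD3 x) (fun x _ => hD0 x)
        (hcont4.intervalIntegrable _ _) (hcont1.intervalIntegrable _ _)
    have I2 : ∫ x in (-(1/2) : ℝ)..(1/2), u2 x * u2 x
        = u2 (1/2) * u1 (1/2) - u2 (-(1/2)) * u1 (-(1/2))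
          - ∫ x in (-(1/2) : ℝ)..(1/2), u3 x * u1 x :=
      integral_mul_deriv_eq_deriv_mul (fun x _ => hD2 x) (fun x _ => hD1 x)
        (hcont3.intervalIntegrable _ _) (hcont2.intervalIntegrable _ _)
    rw [hb3, hb4] at I1
    rw [hb1, hb2] at I2
    have I3 : ∫ x in (-(1/2) : ℝ)..(1/2), u4 x * u x
        = -lam * ∫ x in (-(1/2) : ℝ)..(1/2), u x * u x := by
      rw [← intervalIntegral.integral_const_mul]
      apply intervalIntegral.integral_congr
      intro x hx
      rw [huIcc] at hx
      simp only []
      show u4 x * u x = -lam * (u x * u x)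
      rw [heig x hx]; ring
    -- positivity of ∫ u²
    obtain ⟨x₀, hx₀, hux₀⟩ := hne
    have hS : IsOpen {x : ℝ | u x ≠ 0} := isOpen_ne_fun hcont0 continuous_const
    obtain ⟨δ, hδ, hball⟩ := Metric.isOpen_iff.mp hS x₀ hux₀
    set c := max (-(1/2) : ℝ) (x₀ - δ) with hc
    set d := min ((1/2) : ℝ) (x₀ + δ) with hd
    have hcd : c < d := by
      apply max_lt <;> apply lt_min
      · norm_num
      · linarith [hx₀.1]
      · linarith [hx₀.2]
      · linarith
    have hpos : 0 < ∫ x in c..d, u x * u x := by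
      apply intervalIntegral_pos_of_pos_on ((hcont0.mul hcont0).intervalIntegrable _ _) _ hcd
      intro x hx
      have : u x ≠ 0 := by
        apply hball
        rw [Metric.mem_ball, Real.dist_eq, abs_lt]
        constructor
        · have := hx.1; have := le_max_right (-(1/2):ℝ) (x₀ - δ); linarith [lt_of_le_of_lt (le_max_right (-(1/2):ℝ) (x₀ - δ)) hx.1]
        · linarith [lt_of_lt_of_le hx.2 (min_le_right ((1/2):ℝ) (x₀ + δ))]
      exact mul_self_pos.mpr this
    have hmono : (∫ x in c..d, u x * u x) ≤ ∫ x in (-(1/2) : ℝ)..(1/2), u x * u x := by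
      apply intervalIntegral.integral_mono_interval (le_max_left _ _) hcd.le (min_le_left _ _)
      · filter_upwards with x using mul_self_nonneg (u x)
      · exact (hcont0.mul hcont0).intervalIntegrable _ _
    have hIu : 0 < ∫ x in (-(1/2) : ℝ)..(1/2), u x * u x := lt_of_lt_of_le hpos hmono
    have hI2nonneg : 0 ≤ ∫ x in (-(1/2) : ℝ)..(1/2), u2 x * u2 x :=
      intervalIntegral.integral_nonneg hab (fun x _ => mul_self_nonneg (u2 x))
    -- -lam * ∫u² = ∫ u2² ≥ 0
    have key : -lam * ∫ x in (-(1/2) : ℝ)..(1/2), u x * u x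
        = ∫ x in (-(1/2) : ℝ)..(1/2), u2 x * u2 x := by
      rw [I2, ← I3, I1]; ring
    rcases lt_trichotomy (-lam) 0 with h | h | h
    · exfalso; nlinarith
    · exfalso; exact hlam (by linarith)
    · exact h
  have hu1ne : ¬ (∀ x ∈ Set.Icc (-(1/2) : ℝ) (1/2), u1 x = 0) := by
    intro hz
    have step : ∀ (f g : ℝ → ℝ), (∀ x, HasDerivAt f (g x) x) →
        (∀ x ∈ Ioo (-(1/2) : ℝ) (1/2), f x = 0) →
        (∀ x ∈ Ioo (-(1/2) : ℝ) (1/2), g x = 0) := by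
      intro f g hfg hf x hx
      have hev : f =ᶠ[nhds x] (fun _ => (0:ℝ)) := by
        filter_upwards [Ioo_mem_nhds hx.1 hx.2] with y hy using hf y hy
      have h0 : HasDerivAt f 0 x := (hasDerivAt_const x (0:ℝ)).congr_of_eventuallyEq hev
      exact ((hfg x).unique h0)
    have hz1 : ∀ x ∈ Ioo (-(1/2) : ℝ) (1/2), u1 x = 0 :=
      fun x hx => hz x (Ioo_subset_Icc_self hx)
    have hz2 := step u1 u2 hD1 hz1
    have hz3 := step u2 u3 hD2 hz2
    have hz4 := step u3 u4 hD3 hz3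
    have hu0 : ∀ x ∈ Ioo (-(1/2) : ℝ) (1/2), u x = 0 := by
      intro x hx
      have h := heig x (Ioo_subset_Icc_self hx)
      rw [hz4 x hx] at h
      have := h.symm
      rcases mul_eq_zero.mp this with h' | h'
      · exact absurd (by linarith : lam = 0) hlam
      · exact h'
    have hclos : Set.EqOn u (fun _ => (0:ℝ)) (Icc (-(1/2) : ℝ) (1/2)) := by
      have h1 : Set.EqOn u (fun _ => (0:ℝ)) (Ioo (-(1/2) : ℝ) (1/2)) := fun x hx => hu0 x hx
      have h2 := h1.closure hcont0 continuous_const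
      rwa [closure_Ioo (by norm_num : (-(1/2) : ℝ) ≠ 1/2)] at h2
    obtain ⟨ξ, hξ, hξne⟩ := hne
    exact hξne (hclos hξ)
  set k : ℝ := (-lam) ^ ((4 : ℝ)⁻¹) with hkdef
  have hk : 0 < k := Real.rpow_pos_of_pos hmu _
  have hk4 : k ^ 4 = -lam := by
    rw [hkdef]
    exact_mod_cast Real.rpow_inv_natCast_pow hmu.le (by norm_num : (4:ℕ) ≠ 0)
  have hkne : k ≠ 0 := ne_of_gt hk
  -- coefficients
  set A : ℝ := (u1 0 - u3 0 / k ^ 2) / 2 with hA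
  set B : ℝ := (u2 0 / k - u4 0 / k ^ 3) / 2 with hB
  set Cc : ℝ := (u1 0 + u3 0 / k ^ 2) / 2 with hCc
  set D : ℝ := (u2 0 / k + u4 0 / k ^ 3) / 2 with hD
  -- explicit solution and its derivatives
  set w : ℝ → ℝ := fun x => A * cos (k*x) + B * sin (k*x) + Cc * cosh (k*x) + D * sinh (k*x) with hw
  set w1 : ℝ → ℝ := fun x => k * (-A * sin (k*x) + B * cos (k*x) + Cc * sinh (k*x) + D * cosh (k*x)) with hw1
  set w2 : ℝ → ℝ := fun x => k^2 * (-A * cos (k*x) - B * sin (k*x) + Cc * cosh (k*x) + D * sinh (k*x)) with hw2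
  set w3 : ℝ → ℝ := fun x => k^3 * (A * sin (k*x) - B * cos (k*x) + Cc * sinh (k*x) + D * cosh (k*x)) with hw3
  have hkx : ∀ x : ℝ, HasDerivAt (fun y : ℝ => k * y) k x := by
    intro x; simpa using (hasDerivAt_id x).const_mul k
  have hWc : ∀ x : ℝ, HasDerivAt w (w1 x) x := by
    intro x
    have hc := (Real.hasDerivAt_cos (k*x)).comp x (hkx x)
    have hs := (Real.hasDerivAt_sin (k*x)).comp x (hkx x)
    have hch := (Real.hasDerivAt_cosh (k*x)).comp x (hkx x)
    have hsh := (Real.hasDerivAt_sinh (k*x)).comp x (hkx x)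
    have := (((hc.const_mul A).add (hs.const_mul B)).add (hch.const_mul Cc)).add (hsh.const_mul D)
    convert this using 1
    show w1 x = _
    rw [hw1]; ring
    all_goals rfl
  have hWc1 : ∀ x : ℝ, HasDerivAt w1 (w2 x) x := by
    intro x
    have hc := (Real.hasDerivAt_cos (k*x)).comp x (hkx x)
    have hs := (Real.hasDerivAt_sin (k*x)).comp x (hkx x)
    have hch := (Real.hasDerivAt_cosh (k*x)).comp x (hkx x)
    have hsh := (Real.hasDerivAt_sinh (k*x)).comp x (hkx x)
    have := ((((hs.const_mul (-A)).add (hc.const_mul B)).add (hsh.const_mul Cc)).add (hch.const_mul D)).const_mul k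
    convert this using 1
    show w2 x = _
    rw [hw2]; ring
    all_goals rfl
  have hWc2 : ∀ x : ℝ, HasDerivAt w2 (w3 x) x := by
    intro x
    have hc := (Real.hasDerivAt_cos (k*x)).comp x (hkx x)
    have hs := (Real.hasDerivAt_sin (k*x)).comp x (hkx x)
    have hch := (Real.hasDerivAt_cosh (k*x)).comp x (hkx x)
    have hsh := (Real.hasDerivAt_sinh (k*x)).comp x (hkx x)
    have := ((((hc.const_mul (-A)).sub (hs.const_mul B)).add (hch.const_mul Cc)).add (hsh.const_mul D)).const_mul (k^2)
    convert this using 1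
    show w3 x = _
    rw [hw3]; ring
    all_goals rfl
  have hWc3 : ∀ x : ℝ, HasDerivAt w3 (-lam * w x) x := by
    intro x
    have hc := (Real.hasDerivAt_cos (k*x)).comp x (hkx x)
    have hs := (Real.hasDerivAt_sin (k*x)).comp x (hkx x)
    have hch := (Real.hasDerivAt_cosh (k*x)).comp x (hkx x)
    have hsh := (Real.hasDerivAt_sinh (k*x)).comp x (hkx x)
    have := ((((hs.const_mul A).sub (hc.const_mul B)).add (hsh.const_mul Cc)).add (hch.const_mul D)).const_mul (k^3)
    convert this using 1
    show -lam * w x = _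
    rw [← hk4, hw]; ring
    all_goals rfl
  -- vector field and Lipschitz
  set F : ℝ → ℝ × ℝ × ℝ × ℝ → ℝ × ℝ × ℝ × ℝ :=
    fun _ p => (p.2.1, p.2.2.1, p.2.2.2, -lam * p.1) with hF
  have hm : LipschitzWith ‖lam‖₊ (fun y : ℝ => -lam * y) := by
    apply LipschitzWith.of_dist_le_mul
    intro x y
    rw [Real.dist_eq, Real.dist_eq, ← mul_sub, abs_mul, abs_neg]
    simp [Real.norm_eq_abs]
  have hlipF := ((LipschitzWith.prod_fst.comp LipschitzWith.prod_snd).prodMk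
      (((LipschitzWith.prod_fst.comp LipschitzWith.prod_snd).comp LipschitzWith.prod_snd).prodMk
        (((LipschitzWith.prod_snd.comp LipschitzWith.prod_snd).comp LipschitzWith.prod_snd).prodMk
          (hm.comp (LipschitzWith.prod_fst : LipschitzWith 1 (@Prod.fst ℝ (ℝ × ℝ × ℝ))) ))))
  have hK : ∀ t : ℝ, LipschitzOnWith _ (F t) univ := fun t => hlipF.lipschitzOnWith
  -- the two solutions
  set Y : ℝ → ℝ × ℝ × ℝ × ℝ := fun x => (u1 x, u2 x, u3 x, u4 x) with hY
  set W : ℝ → ℝ × ℝ × ℝ × ℝ := fun x => (w x, w1 x, w2 x, w3 x) with hW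
  have heqon : Set.EqOn Y W (Icc (-(1/2) : ℝ) (1/2)) := by
    apply ODE_solution_unique_of_mem_Icc (v := F) (s := fun _ => univ) (fun t _ => hK t)
      (t₀ := 0) (by norm_num : (0:ℝ) ∈ Ioo (-(1/2) : ℝ) (1/2))
    · exact (Continuous.prodMk hcont1 (Continuous.prodMk hcont2
        (Continuous.prodMk hcont3 hcont4))).continuousOn
    · intro t ht
      have h4 : HasDerivAt u4 (-lam * u1 t) t := by
        have hg : HasDerivAt (fun x => -lam * u x) (-lam * u1 t) t := (hD0 t).const_mul (-lam)
        apply hg.congr_of_eventuallyEq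
        filter_upwards [Ioo_mem_nhds ht.1 ht.2] with x hx
        exact heig x (Ioo_subset_Icc_self hx)
      exact ((hD1 t).prodMk ((hD2 t).prodMk ((hD3 t).prodMk h4)))
    · intro t _; trivial
    · have c0 : Continuous w := Differentiable.continuous (fun x => (hWc x).differentiableAt)
      have c1 : Continuous w1 := Differentiable.continuous (fun x => (hWc1 x).differentiableAt)
      have c2 : Continuous w2 := Differentiable.continuous (fun x => (hWc2 x).differentiableAt)
      have c3 : Continuous w3 := Differentiable.continuous (fun x => (hWc3 x).differentiableAt)
      exact (Continuous.prodMk c0 (Continuous.prodMk c1 (Continuous.prodMk c2 c3))).continuousOn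
    · intro t _
      exact (hWc t).prodMk ((hWc1 t).prodMk ((hWc2 t).prodMk (hWc3 t)))
    · intro t _; trivial
    · refine Prod.ext ?_ (Prod.ext ?_ (Prod.ext ?_ ?_))
      · show u1 0 = w 0
        rw [hw]; simp [hA, hCc]; ring
      · show u2 0 = w1 0
        rw [hw1]; simp [hB, hD]; field_simp; ring
      · show u3 0 = w2 0
        rw [hw2]; simp [hA, hCc]; field_simp; ring
      · show u4 0 = w3 0
        rw [hw3]; simp [hB, hD]; field_simp; ring
  -- evaluate boundary conditions
  have hmem1 : (1/2 : ℝ) ∈ Icc (-(1/2) : ℝ) (1/2) := by norm_num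
  have hmem2 : (-(1/2) : ℝ) ∈ Icc (-(1/2) : ℝ) (1/2) := by norm_num
  have hE1 := congrArg (fun p : ℝ × ℝ × ℝ × ℝ => p.1) (heqon hmem1)
  have hE2 := congrArg (fun p : ℝ × ℝ × ℝ × ℝ => p.1) (heqon hmem2)
  have hE3 := congrArg (fun p : ℝ × ℝ × ℝ × ℝ => p.2.2.1) (heqon hmem1)
  have hE4 := congrArg (fun p : ℝ × ℝ × ℝ × ℝ => p.2.2.1) (heqon hmem2)
  simp only [hY, hW] at hE1 hE2 hE3 hE4
  rw [hb1] at hE1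
  rw [hb2] at hE2
  rw [hb3] at hE3
  rw [hb4] at hE4
  rw [hw] at hE1 hE2
  rw [hw2] at hE3 hE4
  simp only [] at hE1 hE2 hE3 hE4
  have hneg : k * (-(1/2) : ℝ) = -(k * (1/2)) := by ring
  rw [hneg, Real.cos_neg, Real.sin_neg, Real.cosh_neg, Real.sinh_neg] at hE2 hE4
  set co := Real.cos (k * (1/2)) with hco
  set si := Real.sin (k * (1/2)) with hsi
  set ch := Real.cosh (k * (1/2)) with hch
  set sh := Real.sinh (k * (1/2)) with hsh
  have e1 : A * co + B * si + Cc * ch + D * sh = 0 := by linarith [hE1.symm]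
  have e2 : A * co - B * si + Cc * ch - D * sh = 0 := by
    have := hE2.symm; linarith [this]
  have hk2 : (k:ℝ)^2 ≠ 0 := pow_ne_zero 2 hkne
  have e3 : -(A * co) - B * si + Cc * ch + D * sh = 0 := by
    have h := hE3.symm
    have : k ^ 2 * (-A * co - B * si + Cc * ch + D * sh) = 0 := h
    have := (mul_eq_zero.mp this).resolve_left hk2
    linarith
  have e4 : -(A * co) + B * si + Cc * ch - D * sh = 0 := by
    have h := hE4.symm
    have h' : k ^ 2 * (-A * co - B * -si + Cc * ch + D * -sh) = 0 := h
    have h'' := (mul_eq_zero.mp h').resolve_left hk2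
    linear_combination h''
  have hchpos : 0 < ch := by rw [hch]; exact Real.cosh_pos _
  have hshpos : 0 < sh := by rw [hsh]; exact Real.sinh_pos_iff.mpr (by positivity)
  have hCch : Cc * ch = 0 := by linarith
  have hDsh : D * sh = 0 := by linarith
  have hAco : A * co = 0 := by linarith
  have hBsi : B * si = 0 := by linarith
  have hCc0 : Cc = 0 := by
    rcases mul_eq_zero.mp hCch with h | h
    · exact h
    · exact absurd h (ne_of_gt hchpos)
  have hD0' : D = 0 := by
    rcases mul_eq_zero.mp hDsh with h | h
    · exact h
    · exact absurd h (ne_of_gt hshpos)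
  -- k ≥ π in all nontrivial cases
  have hkpi : π ≤ k := by
    by_cases hA0 : A = 0
    · by_cases hB0 : B = 0
      · exfalso
        apply hu1ne
        intro x hx
        have := congrArg (fun p : ℝ × ℝ × ℝ × ℝ => p.1) (heqon hx)
        simp only [hY, hW] at this
        rw [this, hw]
        simp [hA0, hB0, hCc0, hD0']
      · -- sin (k/2) = 0
        have hsi0 : si = 0 := by
          rcases mul_eq_zero.mp hBsi with h | h
          · exact absurd h hB0
          · exact h
        rw [hsi] at hsi0
        obtain ⟨n, hn⟩ := Real.sin_eq_zero_iff.mp hsi0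
        have hn1 : (1 : ℤ) ≤ n := by
          by_contra hcon
          push_neg at hcon
          have hle : n ≤ 0 := by omega
          have : (n : ℝ) ≤ 0 := by exact_mod_cast hle
          nlinarith [pi_pos, hk]
        have : (1 : ℝ) * π ≤ (n : ℝ) * π := by
          apply mul_le_mul_of_nonneg_right _ pi_pos.le
          exact_mod_cast hn1
        nlinarith [pi_pos]
    · -- cos (k/2) = 0
      have hco0 : co = 0 := by
        rcases mul_eq_zero.mp hAco with h | h
        · exact absurd h hA0
        · exact h
      rw [hco] at hco0
      obtain ⟨n, hn⟩ := Real.cos_eq_zero_iff.mp hco0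
      have hn0 : (0 : ℤ) ≤ n := by
        by_contra hcon
        push_neg at hcon
        have hle : n ≤ -1 := by omega
        have : (n : ℝ) ≤ -1 := by exact_mod_cast hle
        nlinarith [pi_pos, hk]
      have : (0 : ℝ) ≤ (n : ℝ) := by exact_mod_cast hn0
      nlinarith [pi_pos]
  have : π ^ 4 ≤ k ^ 4 := pow_le_pow_left₀ pi_pos.le hkpi 4
  rw [hk4] at this
  linarith
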